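/- Let G be a connected finite simple graph with minimum degree d ≥ 1 and let H be a finite simple graph. If S ⊆ V(H) is a maximum G-free subset of V(H), then every vertex v ∈ V(H)∖S has at least d neighbors in S; consequently, the maximum degree of the induced subgraph H∖S on V(H)∖S is at most Δ(H) − d. -/

import Mathlib

open SimpleGraph

/-- `H` contains a subgraph isomorphic to `G`, i.e. there is an injective graph
homomorphism from `G` to `H`. -/
def HasCopy {α β : Type*} (G : SimpleGraph α) (H : SimpleGraph β) : Prop :=
  ∃ f : G →g H, Function.Injective f

open Classical in
/-- If `S` is a maximum `G`-free subset of `V(H)`, then every vertex outside `S` has at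
least `δ(G)` neighbors in `S`; consequently `Δ(H ∖ S) ≤ Δ(H) - δ(G)`. -/
theorem maxDegree_off_maxFreeSubset
    {α : Type*} [Fintype α] (G : SimpleGraph α) [DecidableRel G.Adj]
    {V : Type*} [Fintype V] (H : SimpleGraph V) [DecidableRel H.Adj]
    (hGconn : G.Connected) (hd : 1 ≤ G.minDegree)
    (S : Set V)
    (hfree : ¬ HasCopy G (H.induce S))
    (hmax : ∀ T : Set V, ¬ HasCopy G (H.induce T) → T.ncard ≤ S.ncard) :
    (∀ v ∉ S, G.minDegree ≤ (H.neighborSet v ∩ S).ncard) ∧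
    (H.induce Sᶜ).maxDegree ≤ H.maxDegree - G.minDegree := by
  have key : ∀ v ∉ S, G.minDegree ≤ (H.neighborSet v ∩ S).ncard := by
    intro v hv
    by_contra hlt
    push_neg at hlt
    -- T = insert v S is G-free
    have hTfree : ¬ HasCopy G (H.induce (insert v S)) := by
      rintro ⟨f, hf⟩
      by_cases hhit : ∃ a, (f a : V) = v
      · obtain ⟨a, ha⟩ := hhit
        -- neighbors of a map injectively into N(v) ∩ S
        have hmaps : ∀ b ∈ G.neighborSet a, (f b : V) ∈ H.neighborSet v ∩ S := by
          intro b hb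
          have hne : b ≠ a := fun h => G.irrefl (h ▸ hb)
          have hadj : (H.induce (insert v S)).Adj (f b) (f a) := f.map_adj (G.adj_symm hb)
          have hadjH : H.Adj (f b : V) v := by
            have := hadj
            simp only [comap_adj, Function.Embedding.coe_subtype] at this
            rwa [ha] at this
          have hmem : (f b : V) ∈ insert v S := (f b).2
          have hfbne : (f b : V) ≠ v := by
            intro h
            exact hne (hf (Subtype.ext (h.trans ha.symm)))
          rcases hmem with h | h
          · exact absurd h hfbne
          · exact ⟨H.adj_symm hadjH, h⟩
        have hinj : Set.InjOn (fun b => (f b : V)) (G.neighborSet a) := by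
          intro x _ y _ hxy
          exact hf (Subtype.ext hxy)
        have hle : (G.neighborSet a).ncard ≤ (H.neighborSet v ∩ S).ncard :=
          Set.ncard_le_ncard_of_injOn _ hmaps hinj (Set.toFinite _)
        have hdeg : G.degree a = (G.neighborSet a).ncard := by
          rw [Set.ncard_eq_toFinset_card']
          rfl
        have := G.minDegree_le_degree a
        omega
      · push_neg at hhit
        apply hfree
        refine ⟨⟨fun a => ⟨(f a : V), ?_⟩, ?_⟩, ?_⟩
        · rcases (f a).2 with h | h
          · exact absurd h (hhit a)
          · exact h
        · intro x y hxy
          simpa using f.map_adj hxy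
        · intro x y hxy
          have h' : (f x : V) = (f y : V) := by
            have := congrArg (Subtype.val : {w // w ∈ S} → V) hxy
            simpa using this
          exact hf (Subtype.ext h')
    have := hmax _ hTfree
    rw [Set.ncard_insert_of_notMem hv (Set.toFinite S)] at this
    omega
  refine ⟨key, ?_⟩
  apply SimpleGraph.maxDegree_le_of_forall_degree_le
  rintro ⟨v, hv⟩
  -- degree in induced graph ≤ |N(v) ∩ Sᶜ|
  have h1 : (H.induce Sᶜ).degree ⟨v, hv⟩ ≤ (H.neighborSet v ∩ Sᶜ).ncard := by
    have hdeg : (H.induce Sᶜ).degree ⟨v, hv⟩ =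
        ((H.induce Sᶜ).neighborSet ⟨v, hv⟩).ncard := by
      rw [Set.ncard_eq_toFinset_card']
      rfl
    rw [hdeg]
    have hmaps : ∀ w ∈ (H.induce Sᶜ).neighborSet ⟨v, hv⟩,
        (w : V) ∈ H.neighborSet v ∩ Sᶜ := by
      rintro ⟨w, hw⟩ hadj
      simp only [mem_neighborSet, comap_adj, Function.Embedding.coe_subtype] at hadj
      exact ⟨hadj, hw⟩
    have hinj : Set.InjOn (Subtype.val : {w // w ∈ Sᶜ} → V) ((H.induce Sᶜ).neighborSet ⟨v, hv⟩) := by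
      intro x _ y _ hxy
      exact Subtype.ext hxy
    exact Set.ncard_le_ncard_of_injOn _ hmaps hinj (Set.toFinite _)
  have h2 : (H.neighborSet v ∩ S).ncard + (H.neighborSet v ∩ Sᶜ).ncard =
      (H.neighborSet v).ncard := by
    rw [← Set.diff_eq, Set.ncard_inter_add_ncard_diff_eq_ncard _ _ (Set.toFinite _)]
  have h3 : (H.neighborSet v).ncard = H.degree v := by
    rw [Set.ncard_eq_toFinset_card']
    rfl
  have h4 := key v hv
  have h5 := H.degree_le_maxDegree v
  omega
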